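/- Let p be a positive even integer and k a positive even integer. Then ∑_{r=1, r odd}^{p−1} (2 cos(rπ/p))^k = (p/2) · binom(k, k/2) + p · ∑_{n=1}^{⌊k/p⌋} (−1)^n binom(k, (k − n p)/2), where binom denotes the binomial coefficient (note that (k − n p)/2 is a nonnegative integer for 1 ≤ n ≤ ⌊k/p⌋ since k, p and hence n p are even). In particular, when p > k the sum equals (p/2) · binom(k, k/2). -/

import Mathlib

open Finset

section AuxSumOddCos
open Complex

lemma sum_filter_odd {M : Type*} [AddCommMonoid M] (p : ℕ) (hpe : Even p) (f : ℕ → M) :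
    ∑ r ∈ (range p).filter (fun r => Odd r), f r = ∑ s ∈ range (p/2), f (2*s+1) := by
  have hpm := Nat.even_iff.mp hpe
  refine Finset.sum_nbij' (fun r => r/2) (fun s => 2*s+1) ?_ ?_ ?_ ?_ ?_ <;>
    (intro x hx; simp only [mem_filter, mem_range, Nat.odd_iff] at hx ⊢) <;>
    first
      | omega
      | (congr 1; omega)

-- ω^t = exp(t * (π I / p))
lemma omega_zpow (p : ℕ) (t : ℤ) :
    (Complex.exp (Real.pi * I / p)) ^ t = Complex.exp (t * (Real.pi * I / p)) := by
  rw [Complex.exp_int_mul]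

lemma card_filter_odd' (p : ℕ) (hpe : Even p)
    (h : ∑ r ∈ (range p).filter (fun r => Odd r), (fun _ => 1) r = ∑ _s ∈ range (p/2), (1:ℕ)) :
    ((range p).filter (fun r => Odd r)).card = p/2 := by
  rw [Finset.card_eq_sum_ones, h, Finset.sum_const, smul_eq_mul, mul_one, Finset.card_range]

lemma innerSumOdd (p : ℕ) (hp : 0 < p) (hpe : Even p) (m : ℤ) (hm : Even m) :
    ∑ r ∈ (range p).filter (fun r => Odd r),
      (Complex.exp (Real.pi * I / p)) ^ ((r : ℤ) * m)
    = if (p : ℤ) ∣ m then ((p : ℂ)/2) * (-1 : ℂ) ^ (m / (p : ℤ)) else 0 := by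
  have hp0 : (p : ℂ) ≠ 0 := Nat.cast_ne_zero.mpr hp.ne'
  by_cases hd : (p : ℤ) ∣ m
  · obtain ⟨n, hn⟩ := hd
    rw [if_pos (Dvd.intro _ hn.symm)]
    have key : ∀ r ∈ (range p).filter (fun r => Odd r),
        (Complex.exp (Real.pi * I / p)) ^ ((r : ℤ) * m) = (-1 : ℂ) ^ n := by
      intro r hr
      obtain ⟨hrp, hro⟩ := Finset.mem_filter.mp hr
      rw [omega_zpow]
      have h1 : (((r : ℤ) * m : ℤ) : ℂ) * (Real.pi * I / p) = (((r : ℤ) * n : ℤ) : ℂ) * (Real.pi * I) := by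
        push_cast [hn]
        field_simp
      rw [h1, Complex.exp_int_mul, Complex.exp_pi_mul_I, zpow_mul]
      have hro' : Odd (r : ℤ) := by exact_mod_cast hro
      rw [hro'.neg_one_zpow]
    rw [Finset.sum_congr rfl key, Finset.sum_const, nsmul_eq_mul,
      card_filter_odd' p hpe (sum_filter_odd p hpe fun _ => 1)]
    have hnp : m / (p:ℤ) = n := by rw [hn, Int.mul_ediv_cancel_left _ (by exact_mod_cast hp.ne')]
    have hp2 : ((p/2 : ℕ) : ℂ) = (p:ℂ)/2 := by
      have h2 := Nat.div_mul_cancel hpe.two_dvd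
      field_simp
      exact_mod_cast h2
    rw [hnp, hp2]
  · rw [if_neg hd, sum_filter_odd p hpe]
    have key : ∀ s : ℕ, (Complex.exp (Real.pi * I / p)) ^ (((2*s+1 : ℕ) : ℤ) * m)
        = Complex.exp ((m : ℂ) * (Real.pi * I / p)) * (Complex.exp ((m : ℂ) * (2 * Real.pi * I / p))) ^ s := by
      intro s
      rw [omega_zpow, ← Complex.exp_nat_mul]
      rw [← Complex.exp_add]
      congr 1
      push_cast
      field_simp
      ring
    rw [Finset.sum_congr rfl (fun s _ => key s)]
    rw [← Finset.mul_sum]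
    have hx1 : Complex.exp ((m : ℂ) * (2 * Real.pi * I / p)) ≠ 1 := by
      intro h
      obtain ⟨t, ht⟩ := Complex.exp_eq_one_iff.mp h
      apply hd
      refine ⟨t, ?_⟩
      have hπ : (Real.pi : ℂ) ≠ 0 := Complex.ofReal_ne_zero.mpr Real.pi_ne_zero
      have hne : (2*(Real.pi:ℂ)*I) ≠ 0 := by
        simp [Real.pi_ne_zero, Complex.I_ne_zero]
      have hmm : (m : ℂ) = (t : ℂ) * p := by
        apply mul_right_cancel₀ hne
        field_simp at ht
        linear_combination (2 * (Real.pi:ℂ) * I) * ht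
      rw [mul_comm]
      exact_mod_cast hmm
    rw [geom_sum_eq hx1]
    have hxp : (Complex.exp ((m : ℂ) * (2 * Real.pi * I / p))) ^ (p/2) = 1 := by
      rw [← Complex.exp_nat_mul]
      obtain ⟨m2, hm2⟩ := hm
      rw [Complex.exp_eq_one_iff]
      refine ⟨m2, ?_⟩
      have hp2 : ((p/2 : ℕ) : ℂ) * 2 = (p : ℂ) := by
        obtain ⟨q, hq⟩ := hpe
        push_cast [hq]
        rw [show q + q = 2*q by ring]
        push_cast [Nat.mul_div_cancel_left q (by norm_num : 0 < 2)]
        ring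
      have : (m : ℂ) = 2 * m2 := by push_cast [hm2]; ring
      rw [this]
      field_simp
      linear_combination (m2:ℂ) * hp2
    rw [hxp]
    simp


lemma cos_pow_expand (p k r : ℕ) (hp : 0 < p) :
    ((2 * Real.cos (r * Real.pi / p) : ℝ) : ℂ) ^ k
      = ∑ j ∈ range (k+1), (k.choose j : ℂ) * (Complex.exp (Real.pi * I / p)) ^ ((r:ℤ) * (2*j - k)) := by
  have hω : (Complex.exp (Real.pi * I / p)) ≠ 0 := Complex.exp_ne_zero _
  have hp0 : (p : ℂ) ≠ 0 := Nat.cast_ne_zero.mpr hp.ne'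
  have hcos : ((2 * Real.cos (r * Real.pi / p) : ℝ) : ℂ)
      = (Complex.exp (Real.pi * I / p)) ^ ((r:ℤ)) + (Complex.exp (Real.pi * I / p)) ^ (-(r:ℤ)) := by
    push_cast
    rw [Complex.two_cos, omega_zpow, omega_zpow]
    congr 1 <;> congr 1 <;> push_cast <;> ring
  rw [hcos, add_pow]
  refine Finset.sum_congr rfl fun j hj => ?_
  have hjk : j ≤ k := by simpa [Nat.lt_succ_iff] using hj
  rw [← zpow_natCast (_ ^ ((r:ℤ))) j, ← zpow_natCast (_ ^ (-(r:ℤ))) (k - j),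
    ← zpow_mul, ← zpow_mul, ← zpow_add₀ hω]
  rw [mul_comm]
  congr 2
  push_cast [Nat.cast_sub hjk]
  ring


lemma stepC (p k : ℕ) (hp : 0 < p) (hpe : Even p) (hk : 0 < k) (hke : Even k) :
    ∑ j ∈ (range (k+1)).filter (fun j : ℕ => (p:ℤ) ∣ (2*(j:ℤ) - (k:ℤ))),
      (k.choose j : ℂ) * (((p:ℂ)/2) * (-1:ℂ)^((2*(j:ℤ)-(k:ℤ))/(p:ℤ)))
      = ∑ n ∈ Finset.Icc (-((k/p : ℕ):ℤ)) ((k/p : ℕ):ℤ),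
          (k.choose (((k:ℤ) + n * p)/2).toNat : ℂ) * (((p:ℂ)/2) * (-1:ℂ)^n) := by
  have hp0 : (p : ℤ) ≠ 0 := by exact_mod_cast hp.ne'
  set N := k / p with hN
  have hNp : N * p ≤ k := Nat.div_mul_le_self k p
  have hkN : k < (N+1) * p := by
    rw [hN, add_mul, one_mul]
    exact Nat.lt_div_mul_add hp
  have hNp' : (N:ℤ) * p ≤ k := by exact_mod_cast hNp
  have hkN' : (k:ℤ) < ((N:ℤ)+1) * p := by exact_mod_cast hkN
  have hpos : (0:ℤ) < p := by exact_mod_cast hp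
  have keybound : ∀ t : ℤ, (p:ℤ) * t ≤ k → t ≤ N := by
    intro t h
    by_contra hlt
    push_neg at hlt
    have h3 : (p:ℤ) * ((N:ℤ)+1) ≤ p * t := by
      apply mul_le_mul_of_nonneg_left (by omega) (by positivity)
    nlinarith
  have hkdvd : (2:ℤ) ∣ (k:ℤ) := by exact_mod_cast hke.two_dvd
  have hpdvd : (2:ℤ) ∣ (p:ℤ) := by exact_mod_cast hpe.two_dvd
  refine Finset.sum_nbij' (fun j => (2*(j:ℤ)-(k:ℤ))/(p:ℤ)) (fun n => (((k:ℤ) + n * p)/2).toNat)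
    ?_ ?_ ?_ ?_ ?_
  · intro j hj
    simp only [mem_filter, mem_range, Nat.lt_succ_iff] at hj
    obtain ⟨hjk, t, ht⟩ := hj
    have hjk' : (j:ℤ) ≤ k := by exact_mod_cast hjk
    simp only [Finset.mem_Icc]
    rw [ht, Int.mul_ediv_cancel_left _ hp0]
    constructor
    · have : (p:ℤ) * (-t) ≤ k := by linarith
      have := keybound (-t) this
      omega
    · exact keybound t (by linarith)
  · intro n hn
    simp only [Finset.mem_Icc] at hn
    have h1 : -(k:ℤ) ≤ n * p := by nlinarith [hn.1]
    have h2 : n * (p:ℤ) ≤ k := by nlinarith [hn.2]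
    have heven : (2:ℤ) ∣ ((k:ℤ) + n * p) := dvd_add hkdvd (Dvd.dvd.mul_left hpdvd n)
    obtain ⟨q, hq⟩ : ∃ q, n * (p:ℤ) = q := ⟨_, rfl⟩
    rw [hq] at h1 h2 heven
    simp only [mem_filter, mem_range, Nat.lt_succ_iff]
    refine ⟨?_, n, ?_⟩
    · rw [hq]; omega
    · rw [mul_comm (p:ℤ) n, hq]; omega
  · intro j hj
    simp only [mem_filter, mem_range, Nat.lt_succ_iff] at hj
    obtain ⟨hjk, t, ht⟩ := hj
    rw [ht, Int.mul_ediv_cancel_left _ hp0, mul_comm]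
    omega
  · intro n hn
    simp only [Finset.mem_Icc] at hn
    have h1 : -(k:ℤ) ≤ n * p := by nlinarith [hn.1]
    have h2 : n * (p:ℤ) ≤ k := by nlinarith [hn.2]
    have heven : (2:ℤ) ∣ ((k:ℤ) + n * p) := dvd_add hkdvd (Dvd.dvd.mul_left hpdvd n)
    obtain ⟨q, hq⟩ : ∃ q, n * (p:ℤ) = q := ⟨_, rfl⟩
    rw [hq] at h1 h2 heven ⊢
    have hs : (2*((((k:ℤ) + q)/2).toNat:ℤ) - k) = q := by omega
    rw [hs, ← hq, mul_comm, Int.mul_ediv_cancel_left _ hp0]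
  · intro j hj
    simp only [mem_filter, mem_range, Nat.lt_succ_iff] at hj
    obtain ⟨hjk, t, ht⟩ := hj
    have hteq : (2*(j:ℤ)-(k:ℤ))/(p:ℤ) = t := by rw [ht, Int.mul_ediv_cancel_left _ hp0]
    rw [hteq]
    have hj' : (((k:ℤ) + t * p)/2).toNat = j := by rw [mul_comm]; omega
    rw [hj']

lemma stepD (p k : ℕ) (hp : 0 < p) (hpe : Even p) (hk : 0 < k) (hke : Even k) :
    ∑ n ∈ Finset.Icc (-((k/p : ℕ):ℤ)) ((k/p : ℕ):ℤ),
        (k.choose (((k:ℤ) + n * p)/2).toNat : ℂ) * (((p:ℂ)/2) * (-1:ℂ)^n)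
      = (p:ℂ)/2 * (k.choose (k/2)) +
        (p:ℂ) * ∑ n ∈ Finset.Icc 1 (k/p), (-1:ℂ)^n * (k.choose ((k - n*p)/2)) := by
  have hNp : (k/p) * p ≤ k := Nat.div_mul_le_self k p
  obtain ⟨N, hN⟩ : ∃ N, N = k / p := ⟨_, rfl⟩
  rw [← hN] at hNp ⊢
  have hA : Finset.Icc (-(N:ℤ)) (N:ℤ)
      = ((Finset.Icc (1:ℤ) N).image (fun n => -n)) ∪ insert 0 (Finset.Icc (1:ℤ) N) := by
    ext x
    simp only [Finset.mem_Icc, Finset.mem_union, Finset.mem_image, Finset.mem_insert]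
    constructor
    · rintro ⟨h1, h2⟩
      rcases lt_trichotomy x 0 with h | h | h
      · exact Or.inl ⟨-x, ⟨by omega, by omega⟩, by omega⟩
      · exact Or.inr (Or.inl h)
      · exact Or.inr (Or.inr ⟨by omega, h2⟩)
    · rintro (⟨y, ⟨hy1, hy2⟩, rfl⟩ | rfl | ⟨h1, h2⟩) <;> omega
  have hdisj : Disjoint ((Finset.Icc (1:ℤ) N).image (fun n => -n))
      (insert 0 (Finset.Icc (1:ℤ) N)) := by
    rw [Finset.disjoint_left]
    rintro a ha hb
    simp only [Finset.mem_image, Finset.mem_Icc] at ha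
    simp only [Finset.mem_insert, Finset.mem_Icc] at hb
    obtain ⟨y, ⟨hy1, hy2⟩, rfl⟩ := ha
    omega
  have hinj : Set.InjOn (fun n : ℤ => -n) (Finset.Icc (1:ℤ) N) := fun a _ b _ h => by
    simpa using h
  have h0 : (0:ℤ) ∉ Finset.Icc (1:ℤ) N := by simp
  rw [hA, Finset.sum_union hdisj, Finset.sum_image hinj, Finset.sum_insert h0]
  have hg0 : (k.choose (((k:ℤ) + 0 * p)/2).toNat : ℂ) * (((p:ℂ)/2) * (-1:ℂ)^(0:ℤ))
      = (p:ℂ)/2 * (k.choose (k/2)) := by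
    simp only [zero_mul, add_zero, zpow_zero, mul_one]
    have : (((k:ℤ))/2).toNat = k/2 := by omega
    rw [this, mul_comm]
  have hpair : ∑ x ∈ Finset.Icc (1:ℤ) N, (k.choose (((k:ℤ) + -x * p)/2).toNat : ℂ) *
        (((p:ℂ)/2) * (-1:ℂ)^(-x))
      + ∑ x ∈ Finset.Icc (1:ℤ) N, (k.choose (((k:ℤ) + x * p)/2).toNat : ℂ) *
        (((p:ℂ)/2) * (-1:ℂ)^x)
      = (p:ℂ) * ∑ n ∈ Finset.Icc 1 N, (-1:ℂ)^n * (k.choose ((k - n*p)/2)) := by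
    rw [← Finset.sum_add_distrib, Finset.mul_sum]
    refine Finset.sum_nbij' (fun n => n.toNat) (fun m => (m:ℤ)) ?_ ?_ ?_ ?_ ?_
    · intro n hn; simp only [Finset.mem_Icc] at hn ⊢; omega
    · intro m hm; simp only [Finset.mem_Icc] at hm ⊢; omega
    · intro n hn; simp only [Finset.mem_Icc] at hn; omega
    · intro m hm; simp only [Finset.mem_Icc] at hm; omega
    · intro n hn
      simp only [Finset.mem_Icc] at hn
      obtain ⟨m, rfl⟩ : ∃ m : ℕ, (m:ℤ) = n := ⟨n.toNat, by omega⟩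
      rw [Int.toNat_natCast]
      have hm1 : 1 ≤ m := by exact_mod_cast hn.1
      have hmN : m ≤ N := by exact_mod_cast hn.2
      have hmp : m * p ≤ k := le_trans (Nat.mul_le_mul_right p (hN ▸ hmN)) hNp
      obtain ⟨q, hq⟩ : ∃ q, m * p = q := ⟨_, rfl⟩
      have hqz : (m:ℤ) * (p:ℤ) = (q:ℤ) := by rw [← hq]; push_cast; ring
      rw [hq] at hmp
      have hkm := Nat.even_iff.mp hke
      have hpm := Nat.even_iff.mp hpe
      have hqm : q % 2 = 0 := by rw [← hq]; exact Nat.even_iff.mp (hpe.mul_left m)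
      have heNeg : (((k:ℤ) + -(q:ℤ))/2).toNat = (k - q)/2 := by omega
      have hePos : (((k:ℤ) + (q:ℤ))/2).toNat = k - (k - q)/2 := by omega
      have hle : (k - q)/2 ≤ k := by omega
      have hsgn : (-1:ℂ) ^ (-(m:ℤ)) = (-1:ℂ) ^ ((m:ℤ)) := by
        rw [zpow_neg, ← inv_zpow, inv_neg, inv_one]
      rw [neg_mul, hqz, hq, heNeg, hePos, Nat.choose_symm hle, hsgn, zpow_natCast]
      ring
  linear_combination hg0 + hpair

lemma mainComplex (p k : ℕ) (hp : 0 < p) (hpe : Even p) (hk : 0 < k) (hke : Even k) :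
    ∑ r ∈ (range p).filter (fun r => Odd r), ((2 * Real.cos (r * Real.pi / p) : ℝ) : ℂ) ^ k
      = (p:ℂ)/2 * (k.choose (k/2)) +
        (p:ℂ) * ∑ n ∈ Finset.Icc 1 (k/p), (-1:ℂ)^n * (k.choose ((k - n*p)/2)) := by
  have step1 : ∑ r ∈ (range p).filter (fun r => Odd r),
      ((2 * Real.cos (r * Real.pi / p) : ℝ) : ℂ) ^ k
      = ∑ j ∈ range (k+1), (k.choose j : ℂ) *
          (if (p:ℤ) ∣ (2*(j:ℤ) - (k:ℤ)) then ((p:ℂ)/2) * (-1:ℂ)^((2*(j:ℤ)-(k:ℤ))/(p:ℤ)) else 0) := by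
    rw [Finset.sum_congr rfl (fun r _ => cos_pow_expand p k r hp), Finset.sum_comm]
    refine Finset.sum_congr rfl fun j _ => ?_
    rw [← Finset.mul_sum]
    congr 1
    refine innerSumOdd p hp hpe (2*(j:ℤ) - (k:ℤ)) ?_
    have h1 : Even (2*(j:ℤ)) := ⟨j, by ring⟩
    have h2 : Even ((k:ℤ)) := by exact_mod_cast hke
    exact h1.sub h2
  have step2 : ∑ j ∈ range (k+1), (k.choose j : ℂ) *
      (if (p:ℤ) ∣ (2*(j:ℤ) - (k:ℤ)) then ((p:ℂ)/2) * (-1:ℂ)^((2*(j:ℤ)-(k:ℤ))/(p:ℤ)) else 0)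
      = ∑ j ∈ (range (k+1)).filter (fun j : ℕ => (p:ℤ) ∣ (2*(j:ℤ) - (k:ℤ))),
          (k.choose j : ℂ) * (((p:ℂ)/2) * (-1:ℂ)^((2*(j:ℤ)-(k:ℤ))/(p:ℤ))) := by
    rw [Finset.sum_filter]
    exact Finset.sum_congr rfl fun j _ => by split <;> simp
  rw [step1, step2, stepC p k hp hpe hk hke, stepD p k hp hpe hk hke]


end AuxSumOddCos

/-- eqs. (4.10)–(4.11) of the paper. Let `p` and `k` be positive even
integers. Then
`∑_{r=1, r odd}^{p-1} (2 cos(rπ/p))^k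
  = (p/2)·binom(k, k/2) + p·∑_{n=1}^{⌊k/p⌋} (-1)^n binom(k, (k - n p)/2)`.
In particular, when `p > k` the sum equals `(p/2)·binom(k, k/2)`. -/
theorem sum_odd_cos_pow_even
    (p k : ℕ) (hp : 0 < p) (hpe : Even p) (hk : 0 < k) (hke : Even k) :
    (∑ r ∈ (Finset.range p).filter (fun r => Odd r),
        (2 * Real.cos (r * Real.pi / p)) ^ k
      = (p : ℝ) / 2 * (k.choose (k / 2)) +
        (p : ℝ) * ∑ n ∈ Finset.Icc 1 (k / p),
          (-1 : ℝ) ^ n * (k.choose ((k - n * p) / 2)))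
    ∧ (k < p →
      ∑ r ∈ (Finset.range p).filter (fun r => Odd r),
        (2 * Real.cos (r * Real.pi / p)) ^ k
      = (p : ℝ) / 2 * (k.choose (k / 2))) := by
  have hmain : ∑ r ∈ (Finset.range p).filter (fun r => Odd r),
      (2 * Real.cos (r * Real.pi / p)) ^ k
      = (p : ℝ) / 2 * (k.choose (k / 2)) +
        (p : ℝ) * ∑ n ∈ Finset.Icc 1 (k / p),
          (-1 : ℝ) ^ n * (k.choose ((k - n * p) / 2)) := by
    have h := mainComplex p k hp hpe hk hke
    apply Complex.ofReal_injective
    push_cast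
    convert h using 2
    push_cast
    ring
  refine ⟨hmain, fun hkp => ?_⟩
  rw [hmain]
  have : k / p = 0 := Nat.div_eq_of_lt hkp
  rw [this]
  simp
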